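/- Let 0 ≤ μ < 2, x₀ < ℓ, and α(x) = (x − x₀)^μ on [x₀,ℓ]. Then for every complex-valued u ∈ V²_α(x₀,ℓ), the function x ↦ (α u')'(x)·(x − x₀)·conj(u'(x)) is integrable on (x₀,ℓ) and 2·Re ∫_{x₀}^{ℓ} (α u')'(x)·(x − x₀)·conj(u'(x)) dx = (ℓ − x₀)^{1+μ}·|u'(ℓ)|² − (1 − μ)·∫_{x₀}^{ℓ} α(x)|u'(x)|² dx, where u'(ℓ) denotes the limit of u' at ℓ (which exists since α u' ∈ H¹ and α(ℓ) > 0). -/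

import Mathlib

open MeasureTheory Set Filter Topology

/-- `u ∈ V¹_α(x₀, ℓ)` (complex-valued): `u ∈ L²(x₀, ℓ)`, `u` is locally absolutely
continuous on `(x₀, ℓ]` with a.e. derivative `u'` (expressed via the fundamental theorem of
calculus on compact subintervals of `(x₀, ℓ]`), and `√α · u' ∈ L²(x₀, ℓ)`. -/
def MemV1C (x₀ ℓ : ℝ) (α : ℝ → ℝ) (u u' : ℝ → ℂ) : Prop :=
  MemLp u 2 (volume.restrict (Ioo x₀ ℓ)) ∧
  (∀ x y : ℝ, x₀ < x → x ≤ y → y ≤ ℓ →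
    IntervalIntegrable u' volume x y ∧ u y - u x = ∫ t in x..y, u' t) ∧
  MemLp (fun x => Real.sqrt (α x) • u' x) 2 (volume.restrict (Ioo x₀ ℓ))

/-- `u ∈ V²_α(x₀, ℓ)` (complex-valued): `u ∈ V¹_α(x₀, ℓ)` and `α·u' ∈ H¹(x₀, ℓ)`, i.e.
`α·u' ∈ L²`, it is absolutely continuous with a.e. derivative `g' = (α u')' ∈ L²`. -/
def MemV2C (x₀ ℓ : ℝ) (α : ℝ → ℝ) (u u' g' : ℝ → ℂ) : Prop :=
  MemV1C x₀ ℓ α u u' ∧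
  MemLp (fun x => α x • u' x) 2 (volume.restrict (Ioo x₀ ℓ)) ∧
  MemLp g' 2 (volume.restrict (Ioo x₀ ℓ)) ∧
  ∀ x y : ℝ, x₀ < x → x ≤ y → y ≤ ℓ →
    IntervalIntegrable g' volume x y ∧ α y • u' y - α x • u' x = ∫ t in x..y, g' t

lemma fubini_triangle {a b : ℝ} (F H : ℝ → ℂ)
    (hF : IntegrableOn F (Ioc a b)) (hH : IntegrableOn H (Ioc a b)) :
    ∫ x in Ioc a b, F x * ∫ y in Ioc a b ∩ Ici x, H y
      = ∫ y in Ioc a b, (∫ x in Ioc a b ∩ Iic y, F x) * H y := by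
  set μ := volume.restrict (Ioc a b) with hμ
  have hKint : Integrable (fun p : ℝ × ℝ => ({p : ℝ × ℝ | p.1 ≤ p.2}).indicator
      (fun p => F p.1 * H p.2) p) (μ.prod μ) :=
    (hF.mul_prod hH).indicator (measurableSet_le measurable_fst measurable_snd)
  have swap := MeasureTheory.integral_integral_swap (μ := μ) (ν := μ)
    (f := fun x y => ({p : ℝ × ℝ | p.1 ≤ p.2}).indicator (fun p => F p.1 * H p.2) (x, y))
    hKint
  have h1 : ∀ x : ℝ, (∫ y, ({p : ℝ × ℝ | p.1 ≤ p.2}).indicator (fun p => F p.1 * H p.2) (x, y) ∂μ)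
      = F x * ∫ y in Ioc a b ∩ Ici x, H y := by
    intro x
    have e : (fun y => ({p : ℝ × ℝ | p.1 ≤ p.2}).indicator (fun p => F p.1 * H p.2) (x, y))
        = (Ici x).indicator (fun y => F x * H y) := by
      ext y
      by_cases h : x ≤ y <;> simp [Set.indicator, h]
    rw [e, integral_indicator measurableSet_Ici, hμ,
      Measure.restrict_restrict measurableSet_Ici, Set.inter_comm, integral_const_mul]
  have h2 : ∀ y : ℝ, (∫ x, ({p : ℝ × ℝ | p.1 ≤ p.2}).indicator (fun p => F p.1 * H p.2) (x, y) ∂μ)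
      = (∫ x in Ioc a b ∩ Iic y, F x) * H y := by
    intro y
    have e : (fun x => ({p : ℝ × ℝ | p.1 ≤ p.2}).indicator (fun p => F p.1 * H p.2) (x, y))
        = (Iic y).indicator (fun x => F x * H y) := by
      ext x
      by_cases h : x ≤ y <;> simp [Set.indicator, h]
    rw [e, integral_indicator measurableSet_Iic, hμ,
      Measure.restrict_restrict measurableSet_Iic, Set.inter_comm, integral_mul_const]
  calc ∫ x in Ioc a b, F x * ∫ y in Ioc a b ∩ Ici x, H y
      = ∫ x, (∫ y, ({p : ℝ × ℝ | p.1 ≤ p.2}).indicator (fun p => F p.1 * H p.2) (x, y) ∂μ) ∂μ := by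
        rw [hμ]; exact (setIntegral_congr_fun measurableSet_Ioc (fun x _ => (h1 x).symm))
    _ = ∫ y, (∫ x, ({p : ℝ × ℝ | p.1 ≤ p.2}).indicator (fun p => F p.1 * H p.2) (x, y) ∂μ) ∂μ := swap
    _ = ∫ y in Ioc a b, (∫ x in Ioc a b ∩ Iic y, F x) * H y := by
        rw [hμ]; exact (setIntegral_congr_fun measurableSet_Ioc (fun y _ => h2 y))


lemma rep_continuousOn {a b : ℝ} (f F : ℝ → ℂ)
    (hF : IntegrableOn F (Ioc a b))
    (hf : ∀ x ∈ Icc a b, f x = f a + ∫ t in Ioc a x, F t) :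
    ContinuousOn f (Icc a b) := by
  have hFI : IntegrableOn F (Icc a b) := by
    rwa [integrableOn_Icc_iff_integrableOn_Ioc]
  refine ContinuousOn.congr ?_ hf
  exact (continuousOn_const (c := f a)).add (intervalIntegral.continuousOn_primitive hFI)

lemma ibp {a b : ℝ} (hab : a ≤ b) (f h F H : ℝ → ℂ)
    (hF : IntegrableOn F (Ioc a b)) (hH : IntegrableOn H (Ioc a b))
    (hf : ∀ x ∈ Icc a b, f x = f a + ∫ t in Ioc a x, F t)
    (hh : ∀ x ∈ Icc a b, h x = h a + ∫ t in Ioc a x, H t) :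
    IntegrableOn (fun x => F x * h x) (Ioc a b) ∧
    IntegrableOn (fun x => f x * H x) (Ioc a b) ∧
    (∫ x in Ioc a b, F x * h x) + (∫ x in Ioc a b, f x * H x) = f b * h b - f a * h a := by
  have hfc : ContinuousOn f (Icc a b) := rep_continuousOn f F hF hf
  have hhc : ContinuousOn h (Icc a b) := rep_continuousOn h H hH hh
  have hFI : IntegrableOn F (Icc a b) := by rwa [integrableOn_Icc_iff_integrableOn_Ioc]
  have hHI : IntegrableOn H (Icc a b) := by rwa [integrableOn_Icc_iff_integrableOn_Ioc]
  have int1 : IntegrableOn (fun x => F x * h x) (Ioc a b) :=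
    (hFI.mul_continuousOn hhc isCompact_Icc).mono_set Ioc_subset_Icc_self
  have int2 : IntegrableOn (fun x => f x * H x) (Ioc a b) :=
    (hHI.continuousOn_mul hfc isCompact_Icc).mono_set Ioc_subset_Icc_self
  refine ⟨int1, int2, ?_⟩
  have hsplitH : ∀ x ∈ Icc a b, (∫ t in Ioc a x, H t) + (∫ t in Ioc x b, H t)
      = ∫ t in Ioc a b, H t := by
    intro x hx
    rw [← setIntegral_union (Set.Ioc_disjoint_Ioc_of_le le_rfl) measurableSet_Ioc
      (hH.mono_set (Ioc_subset_Ioc_right hx.2)) (hH.mono_set (Ioc_subset_Ioc_left hx.1)),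
      Set.Ioc_union_Ioc_eq_Ioc hx.1 hx.2]
  have hb' : h b = h a + ∫ t in Ioc a b, H t := hh b ⟨hab, le_rfl⟩
  have hh' : ∀ x ∈ Icc a b, h x = h b - ∫ t in Ioc x b, H t := by
    intro x hx
    rw [hh x hx, hb', ← hsplitH x hx]; ring
  have hcont1 : ContinuousOn (fun x => ∫ t in Ioc x b, H t) (Icc a b) := by
    have e : ∀ x ∈ Icc a b, (∫ t in Ioc a b, H t) - (∫ t in Ioc a x, H t)
        = ∫ t in Ioc x b, H t := by
      intro x hx; rw [← hsplitH x hx]; ring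
    exact ContinuousOn.congr (continuousOn_const.sub
      (intervalIntegral.continuousOn_primitive hHI)) (fun x hx => (e x hx).symm)
  have hcont2 : ContinuousOn (fun x => ∫ t in Ioc a x, F t) (Icc a b) :=
    intervalIntegral.continuousOn_primitive hFI
  -- on Ioc a b, the triangle integrals are partial primitives
  have hIci : ∀ x ∈ Ioc a b, (∫ y in Ioc a b ∩ Ici x, H y) = ∫ t in Ioc x b, H t := by
    intro x hx
    have hs : Ioc a b ∩ Ici x = Icc x b := by
      ext y; simp only [mem_inter_iff, mem_Ioc, mem_Ici, mem_Icc]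
      exact ⟨fun ⟨⟨_, h2⟩, h3⟩ => ⟨h3, h2⟩,
        fun ⟨h1, h2⟩ => ⟨⟨lt_of_lt_of_le hx.1 h1, h2⟩, h1⟩⟩
    rw [hs, integral_Icc_eq_integral_Ioc]
  have hIic : ∀ x ∈ Ioc a b, (∫ y in Ioc a b ∩ Iic x, F y) = ∫ t in Ioc a x, F t := by
    intro x hx
    have hs : Ioc a b ∩ Iic x = Ioc a x := by
      ext y; simp only [mem_inter_iff, mem_Ioc, mem_Iic]
      exact ⟨fun ⟨⟨h1, _⟩, h3⟩ => ⟨h1, h3⟩,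
        fun ⟨h1, h2⟩ => ⟨⟨h1, h2.trans hx.2⟩, h2⟩⟩
    rw [hs]
  have intT1 : IntegrableOn (fun x => F x * ∫ t in Ioc x b, H t) (Ioc a b) :=
    (hFI.mul_continuousOn hcont1 isCompact_Icc).mono_set Ioc_subset_Icc_self
  have intT2 : IntegrableOn (fun x => (∫ t in Ioc a x, F t) * H x) (Ioc a b) :=
    (hHI.continuousOn_mul hcont2 isCompact_Icc).mono_set Ioc_subset_Icc_self
  have eA : (∫ x in Ioc a b, F x * h x)
      = (∫ x in Ioc a b, F x) * h b - ∫ x in Ioc a b, F x * ∫ t in Ioc x b, H t := by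
    have e1 : ∀ x ∈ Ioc a b, F x * h x = F x * h b - F x * ∫ t in Ioc x b, H t := by
      intro x hx
      rw [hh' x ⟨hx.1.le, hx.2⟩]; ring
    rw [setIntegral_congr_fun measurableSet_Ioc e1, integral_sub (hF.mul_const _) intT1,
      integral_mul_const]
  have eB : (∫ x in Ioc a b, f x * H x)
      = f a * (∫ x in Ioc a b, H x) + ∫ x in Ioc a b, (∫ t in Ioc a x, F t) * H x := by
    have e1 : ∀ x ∈ Ioc a b, f x * H x = f a * H x + (∫ t in Ioc a x, F t) * H x := by
      intro x hx
      rw [hf x ⟨hx.1.le, hx.2⟩]; ring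
    rw [setIntegral_congr_fun measurableSet_Ioc e1, integral_add (hH.const_mul _) intT2,
      integral_const_mul]
  have fub : (∫ x in Ioc a b, F x * ∫ t in Ioc x b, H t)
      = ∫ x in Ioc a b, (∫ t in Ioc a x, F t) * H x := by
    rw [← setIntegral_congr_fun measurableSet_Ioc
        (fun x hx => by dsimp only; rw [hIci x hx] : EqOn (fun x => F x * ∫ y in Ioc a b ∩ Ici x, H y)
          (fun x => F x * ∫ t in Ioc x b, H t) (Ioc a b)),
      ← setIntegral_congr_fun measurableSet_Ioc
        (fun x hx => by dsimp only; rw [hIic x hx] : EqOn (fun x => (∫ y in Ioc a b ∩ Iic x, F y) * H x)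
          (fun x => (∫ t in Ioc a x, F t) * H x) (Ioc a b))]
    exact fubini_triangle F H hF hH
  have hfb : f b - f a = ∫ x in Ioc a b, F x := by
    rw [hf b ⟨hab, le_rfl⟩]; ring
  have hhb : h b - h a = ∫ x in Ioc a b, H x := by
    rw [hb']; ring
  rw [eA, eB, fub, ← hfb, ← hhb]; ring

lemma tendsto_Ioc_integral {x₀ ℓ : ℝ} (hxl : x₀ < ℓ) {E : Type*} [NormedAddCommGroup E]
    [NormedSpace ℝ E] (h : ℝ → E) (hint : IntegrableOn h (Ioo x₀ ℓ)) :
    Tendsto (fun a => ∫ x in Ioc a ℓ, h x) (𝓝[>] x₀) (𝓝 (∫ x in Ioo x₀ ℓ, h x)) := by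
  have hIcc : IntegrableOn h (Icc x₀ ℓ) := (integrableOn_Icc_iff_integrableOn_Ioo).2 hint
  have hIoc : IntegrableOn h (Ioc x₀ ℓ) := (integrableOn_Ioc_iff_integrableOn_Ioo).2 hint
  have hcont : ContinuousOn (fun a => ∫ t in Ioc x₀ a, h t) (Icc x₀ ℓ) :=
    intervalIntegral.continuousOn_primitive hIcc
  have hcw : Tendsto (fun a => ∫ t in Ioc x₀ a, h t) (𝓝[>] x₀) (𝓝 0) := by
    have h0 : (∫ t in Ioc x₀ x₀, h t) = 0 := by simp
    have := (hcont x₀ ⟨le_rfl, hxl.le⟩).mono (Ioo_subset_Icc_self (a := x₀) (b := ℓ))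
    rw [ContinuousWithinAt, h0, nhdsWithin_Ioo_eq_nhdsGT hxl] at this
    exact this
  have hT : Tendsto (fun a => (∫ x in Ioo x₀ ℓ, h x) - ∫ t in Ioc x₀ a, h t) (𝓝[>] x₀)
      (𝓝 (∫ x in Ioo x₀ ℓ, h x)) := by
    simpa using tendsto_const_nhds.sub hcw
  refine hT.congr' ?_
  filter_upwards [Ioo_mem_nhdsGT_of_mem (left_mem_Ico.2 hxl)] with a ha
  have hsplit : (∫ t in Ioc x₀ a, h t) + (∫ t in Ioc a ℓ, h t) = ∫ t in Ioc x₀ ℓ, h t := by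
    rw [← setIntegral_union (Set.Ioc_disjoint_Ioc_of_le le_rfl) measurableSet_Ioc
      (hIoc.mono_set (Ioc_subset_Ioc_right ha.2.le)) (hIoc.mono_set (Ioc_subset_Ioc_left ha.1.le)),
      Set.Ioc_union_Ioc_eq_Ioc ha.1.le ha.2.le]
  rw [← integral_Ioc_eq_integral_Ioo, ← hsplit]
  abel

/-- Let `0 ≤ μ < 2`, `x₀ < ℓ`, and `α(x) = (x - x₀)^μ`. For every
complex-valued `u ∈ V²_α(x₀, ℓ)` (with `(α u')' = g'`), the function
`x ↦ (α u')'(x)·(x - x₀)·conj(u'(x))` is integrable on `(x₀, ℓ)` and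
`2·Re ∫_{x₀}^{ℓ} (α u')'(x)·(x - x₀)·conj(u'(x)) dx
  = (ℓ - x₀)^{1+μ}·|u'(ℓ)|² - (1 - μ)·∫_{x₀}^{ℓ} α(x)|u'(x)|² dx`. -/
theorem multiplier_identity (μ x₀ ℓ : ℝ) (hμ0 : 0 ≤ μ) (hμ2 : μ < 2) (hxl : x₀ < ℓ)
    (u u' g' : ℝ → ℂ) (hu : MemV2C x₀ ℓ (fun x => (x - x₀) ^ μ) u u' g') :
    IntegrableOn (fun x => g' x * ((x - x₀ : ℝ) : ℂ) * (starRingEnd ℂ) (u' x))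
        (Ioo x₀ ℓ) volume ∧
      2 * (∫ x in Ioo x₀ ℓ, g' x * ((x - x₀ : ℝ) : ℂ) * (starRingEnd ℂ) (u' x)).re =
        (ℓ - x₀) ^ (1 + μ) * ‖u' ℓ‖ ^ 2 -
          (1 - μ) * ∫ x in Ioo x₀ ℓ, (x - x₀) ^ μ * ‖u' x‖ ^ 2 := by
  obtain ⟨⟨huL2, hurep, hv⟩, hG2, hg'2, hGrep⟩ := hu
  set f₀ : ℝ → ℂ := fun x => g' x * ((x - x₀ : ℝ) : ℂ) * (starRingEnd ℂ) (u' x) with hf₀def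
  set S : ℝ → ℝ := fun x => (x - x₀) ^ μ * ‖u' x‖ ^ 2 with hSdef
  set G : ℝ → ℂ := fun x => ((x - x₀) ^ μ : ℝ) • u' x with hGdef
  set v : ℝ → ℂ := fun x => Real.sqrt ((x - x₀) ^ μ) • u' x with hvdef
  -- ‖v x‖ ^ 2 is integrable on Ioo x₀ ℓ
  have hv2int : IntegrableOn (fun x => ‖v x‖ ^ 2) (Ioo x₀ ℓ) volume := hv.norm.integrable_sq
  -- S agrees with ‖v‖² on Ioo
  have hSeq : EqOn (fun x => ‖v x‖ ^ 2) S (Ioo x₀ ℓ) := by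
    intro x hx
    have ht : (0:ℝ) < x - x₀ := by simp [hx.1, sub_pos]
    have hα : (0:ℝ) ≤ (x - x₀) ^ μ := Real.rpow_nonneg ht.le μ
    simp only [hvdef, hSdef, norm_smul, Real.norm_eq_abs, abs_of_nonneg (Real.sqrt_nonneg _)]
    rw [mul_pow, Real.sq_sqrt hα]
  have hSint : IntegrableOn S (Ioo x₀ ℓ) volume :=
    hv2int.congr_fun hSeq measurableSet_Ioo
  -- u' is a.e. strongly measurable on Ioo
  have hu'm : AEStronglyMeasurable u' (volume.restrict (Ioo x₀ ℓ)) := by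
    have hccont : ContinuousOn (fun x => (Real.sqrt ((x - x₀) ^ μ))⁻¹) (Ioo x₀ ℓ) := by
      apply ContinuousOn.inv₀
      · exact ((continuousOn_id.sub continuousOn_const).rpow_const
          (fun x hx => Or.inl (by simp [sub_ne_zero]; exact ne_of_gt hx.1))).sqrt
      · intro x hx
        have ht : (0:ℝ) < x - x₀ := sub_pos.2 hx.1
        exact ne_of_gt (Real.sqrt_pos.2 (Real.rpow_pos_of_pos ht μ))
    have hcm := hccont.aestronglyMeasurable (μ := volume) measurableSet_Ioo
    refine AEStronglyMeasurable.congr (hcm.smul hv.1) ?_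
    filter_upwards [self_mem_ae_restrict measurableSet_Ioo] with x hx
    have ht : (0:ℝ) < x - x₀ := sub_pos.2 hx.1
    have hs : Real.sqrt ((x - x₀) ^ μ) ≠ 0 :=
      ne_of_gt (Real.sqrt_pos.2 (Real.rpow_pos_of_pos ht μ))
    simp only [Pi.smul_apply', hvdef, smul_smul, inv_mul_cancel₀ hs, one_smul]
  -- f₀ is a.e. strongly measurable on Ioo
  have hf₀m : AEStronglyMeasurable f₀ (volume.restrict (Ioo x₀ ℓ)) := by
    refine (hg'2.1.mul ?_).mul (continuous_star.comp_aestronglyMeasurable hu'm)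
    exact (Complex.continuous_ofReal.comp (continuous_id.sub continuous_const)).aestronglyMeasurable
  -- dominating function
  have hDint : Integrable (fun x => (ℓ - x₀) ^ (1 - μ/2) * (‖g' x‖ * ‖v x‖))
      (volume.restrict (Ioo x₀ ℓ)) := by
    refine Integrable.const_mul ?_ _
    have hsum : Integrable (fun x => (‖g' x‖ ^ 2 + ‖v x‖ ^ 2) / 2)
        (volume.restrict (Ioo x₀ ℓ)) := ((hg'2.norm.integrable_sq).add hv.norm.integrable_sq).div_const 2
    refine hsum.mono' (hg'2.1.norm.mul hv.1.norm) (ae_of_all _ fun x => ?_)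
    have h1 : (0:ℝ) ≤ ‖g' x‖ * ‖v x‖ := by positivity
    rw [Real.norm_of_nonneg h1]
    nlinarith [sq_nonneg (‖g' x‖ - ‖v x‖)]
  -- norm identity on Ioo
  have hnorm_eq : ∀ x ∈ Ioo x₀ ℓ, ‖f₀ x‖ = (x - x₀) ^ (1 - μ/2) * (‖g' x‖ * ‖v x‖) := by
    intro x hx
    have ht : (0:ℝ) < x - x₀ := sub_pos.2 hx.1
    have hvn : ‖v x‖ = (x - x₀) ^ (μ/2) * ‖u' x‖ := by
      simp only [hvdef, norm_smul, Real.norm_eq_abs, abs_of_nonneg (Real.sqrt_nonneg _)]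
      congr 1
      rw [Real.sqrt_eq_rpow, ← Real.rpow_mul ht.le]
      ring_nf
    simp only [hf₀def, norm_mul, Complex.norm_real, Real.norm_eq_abs, abs_of_pos ht,
      Complex.norm_conj]
    rw [hvn]
    have key : (x - x₀) ^ (1 - μ/2) * (x - x₀) ^ (μ/2) = x - x₀ := by
      rw [← Real.rpow_add ht]; norm_num
    linear_combination (-(‖g' x‖ * ‖u' x‖)) * key
  -- integrability of f₀ on Ioo
  have hf₀int : IntegrableOn f₀ (Ioo x₀ ℓ) volume := by
    refine hDint.mono' hf₀m ?_
    filter_upwards [self_mem_ae_restrict measurableSet_Ioo] with x hx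
    rw [hnorm_eq x hx]
    have ht : (0:ℝ) < x - x₀ := sub_pos.2 hx.1
    have h2 : (x - x₀) ^ (1 - μ/2) ≤ (ℓ - x₀) ^ (1 - μ/2) :=
      Real.rpow_le_rpow ht.le (by linarith [hx.2]) (by linarith)
    have h1 : (0:ℝ) ≤ ‖g' x‖ * ‖v x‖ := by positivity
    exact mul_le_mul_of_nonneg_right h2 h1
  refine ⟨hf₀int, ?_⟩
  -- conj-integrability helper
  have conj_int : ∀ {f : ℝ → ℂ} {s : Set ℝ}, IntegrableOn f s volume →
      IntegrableOn (fun x => (starRingEnd ℂ) (f x)) s volume := by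
    intro f s hf
    refine hf.norm.mono' (continuous_star.comp_aestronglyMeasurable hf.1)
      (ae_of_all _ fun a => ?_)
    simp
  -- representation of G as an integral of g'
  have hGrep' : ∀ a x : ℝ, x₀ < a → a ≤ x → x ≤ ℓ →
      G x = G a + ∫ t in Ioc a x, g' t := by
    intro a x ha hax hxle
    have h := (hGrep a x ha hax hxle).2
    rw [intervalIntegral.integral_of_le hax] at h
    exact sub_eq_iff_eq_add'.1 h
  -- key identity for every a ∈ Ioo x₀ ℓ
  have key : ∀ a ∈ Ioo x₀ ℓ,
      (1 - μ) * (∫ x in Ioc a ℓ, S x) + 2 * (∫ x in Ioc a ℓ, f₀ x).re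
        = (ℓ - x₀) ^ (1 + μ) * ‖u' ℓ‖ ^ 2 - (a - x₀) ^ (1 + μ) * ‖u' a‖ ^ 2 := by
    intro a ha
    obtain ⟨hax₀, haℓ⟩ := ha
    -- step B : representation of P = G conj G
    have hPQ : ∀ x y : ℝ, x₀ < x → x ≤ y → y ≤ ℓ →
        IntegrableOn (fun t => g' t * (starRingEnd ℂ) (G t)
          + G t * (starRingEnd ℂ) (g' t)) (Ioc x y) volume ∧
        G y * (starRingEnd ℂ) (G y) - G x * (starRingEnd ℂ) (G x)
          = ∫ t in Ioc x y, (g' t * (starRingEnd ℂ) (G t) + G t * (starRingEnd ℂ) (g' t)) := by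
      intro x y hx hxy hyl
      have hFi : IntegrableOn g' (Ioc x y) volume :=
        (intervalIntegrable_iff_integrableOn_Ioc_of_le hxy).1 (hGrep x y hx hxy hyl).1
      have hHi : IntegrableOn (fun t => (starRingEnd ℂ) (g' t)) (Ioc x y) volume := conj_int hFi
      have hfrep : ∀ z ∈ Icc x y, G z = G x + ∫ t in Ioc x z, g' t := fun z hz =>
        hGrep' x z hx hz.1 (hz.2.trans hyl)
      have hhrep : ∀ z ∈ Icc x y, (starRingEnd ℂ) (G z)
          = (starRingEnd ℂ) (G x) + ∫ t in Ioc x z, (starRingEnd ℂ) (g' t) := by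
        intro z hz
        rw [integral_conj, ← map_add]
        exact congrArg (starRingEnd ℂ) (hfrep z hz)
      obtain ⟨i1, i2, heq⟩ := ibp hxy G (fun t => (starRingEnd ℂ) (G t)) g'
        (fun t => (starRingEnd ℂ) (g' t)) hFi hHi hfrep hhrep
      refine ⟨i1.add i2, ?_⟩
      rw [integral_add i1 i2]
      exact heq.symm
    set Q : ℝ → ℂ := fun t => g' t * (starRingEnd ℂ) (G t) + G t * (starRingEnd ℂ) (g' t)
      with hQdef
    have hQint : IntegrableOn Q (Ioc a ℓ) volume := (hPQ a ℓ hax₀ haℓ.le le_rfl).1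
    have hPrep : ∀ x ∈ Icc a ℓ, G x * (starRingEnd ℂ) (G x)
        = G a * (starRingEnd ℂ) (G a) + ∫ t in Ioc a x, Q t := fun x hx =>
      sub_eq_iff_eq_add'.1 ((hPQ a x hax₀ hx.1 hx.2).2)
    -- the weight function w(x) = (x - x₀)^(1-μ)
    have hw_deriv : ∀ t ∈ Icc a ℓ, HasDerivAt (fun s : ℝ => (s - x₀) ^ (1 - μ))
        ((1 - μ) * (t - x₀) ^ (-μ)) t := by
      intro t htm
      have ht : (0:ℝ) < t - x₀ := sub_pos.2 (lt_of_lt_of_le hax₀ htm.1)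
      have h1 : HasDerivAt (fun s : ℝ => s - x₀) 1 t := (hasDerivAt_id t).sub_const x₀
      have h2 := h1.rpow_const (p := 1 - μ) (Or.inl (ne_of_gt ht))
      have : (1 - μ) * (t - x₀) ^ (1 - μ - 1) = (1 - μ) * (t - x₀) ^ (-μ) := by
        congr 1
        congr 1
        ring
      simpa [this] using h2
    have hw'contOn : ContinuousOn (fun t : ℝ => (1 - μ) * (t - x₀) ^ (-μ)) (Icc a ℓ) := by
      refine continuousOn_const.mul ((continuousOn_id.sub continuousOn_const).rpow_const ?_)
      intro t htm
      exact Or.inl (ne_of_gt (sub_pos.2 (lt_of_lt_of_le hax₀ htm.1)))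
    have hw'int : IntegrableOn (fun t : ℝ => (((1 - μ) * (t - x₀) ^ (-μ) : ℝ) : ℂ))
        (Ioc a ℓ) volume :=
      ((Complex.continuous_ofReal.comp_continuousOn hw'contOn).integrableOn_Icc).mono_set
        Ioc_subset_Icc_self
    have hwrep : ∀ x ∈ Icc a ℓ, (((x - x₀) ^ (1 - μ) : ℝ) : ℂ)
        = (((a - x₀) ^ (1 - μ) : ℝ) : ℂ)
          + ∫ t in Ioc a x, (((1 - μ) * (t - x₀) ^ (-μ) : ℝ) : ℂ) := by
      intro x hx
      have hFTC := intervalIntegral.integral_eq_sub_of_hasDerivAt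
        (f := fun s : ℝ => (s - x₀) ^ (1 - μ)) (f' := fun t => (1 - μ) * (t - x₀) ^ (-μ))
        (a := a) (b := x)
        (fun t htm => hw_deriv t (by
          rw [uIcc_of_le hx.1] at htm
          exact ⟨htm.1, htm.2.trans hx.2⟩))
        (((hw'contOn.mono (by
          rw [uIcc_of_le hx.1]
          exact Icc_subset_Icc le_rfl hx.2)).intervalIntegrable))
      rw [← intervalIntegral.integral_of_le hx.1, intervalIntegral.integral_ofReal, hFTC]
      push_cast
      ring
    obtain ⟨intC1, intC2, eqC⟩ := ibp haℓ.le
      (fun x => (((x - x₀) ^ (1 - μ) : ℝ) : ℂ)) (fun x => G x * (starRingEnd ℂ) (G x))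
      (fun t => (((1 - μ) * (t - x₀) ^ (-μ) : ℝ) : ℂ)) Q
      hw'int hQint hwrep hPrep
    -- pointwise identification of the first integrand
    have e1 : (∫ x in Ioc a ℓ,
          (((1 - μ) * (x - x₀) ^ (-μ) : ℝ) : ℂ) * (G x * (starRingEnd ℂ) (G x)))
        = (((1 - μ) * ∫ x in Ioc a ℓ, S x : ℝ) : ℂ) := by
      have ept : ∀ x ∈ Ioc a ℓ,
          (((1 - μ) * (x - x₀) ^ (-μ) : ℝ) : ℂ) * (G x * (starRingEnd ℂ) (G x))
          = (((1 - μ) * S x : ℝ) : ℂ) := by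
        intro x hx
        have ht : (0:ℝ) < x - x₀ := sub_pos.2 (lt_trans hax₀ hx.1)
        have hP : G x * (starRingEnd ℂ) (G x) = ((‖G x‖ ^ 2 : ℝ) : ℂ) := by
          rw [Complex.mul_conj]
          norm_cast
          rw [← Complex.sq_norm]
        rw [hP, ← Complex.ofReal_mul]
        congr 1
        have hGn : ‖G x‖ = (x - x₀) ^ μ * ‖u' x‖ := by
          simp [hGdef, norm_smul, Real.norm_eq_abs, abs_of_pos (Real.rpow_pos_of_pos ht μ)]
        rw [hGn]
        simp only [hSdef]
        have key2 : (x - x₀) ^ (-μ) * ((x - x₀) ^ μ) = 1 := by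
          rw [← Real.rpow_add ht]; norm_num
        linear_combination ((1 - μ) * (x - x₀) ^ μ * ‖u' x‖ ^ 2) * key2
      have hSIoc : IntegrableOn S (Ioc a ℓ) volume :=
        (integrableOn_Ioc_iff_integrableOn_Ioo).2 (hSint.mono_set (Ioo_subset_Ioo_left hax₀.le))
      rw [setIntegral_congr_fun measurableSet_Ioc ept]
      calc ∫ x in Ioc a ℓ, (((1 - μ) * S x : ℝ) : ℂ)
          = ∫ x in Ioc a ℓ, Complex.ofRealCLM ((1 - μ) * S x) := by simp
        _ = Complex.ofRealCLM (∫ x in Ioc a ℓ, (1 - μ) * S x) :=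
            ContinuousLinearMap.integral_comp_comm _ (hSIoc.const_mul _)
        _ = (((1 - μ) * ∫ x in Ioc a ℓ, S x : ℝ) : ℂ) := by rw [integral_const_mul]; simp
    -- pointwise identification of the second integrand
    have hf₀Ioc : IntegrableOn f₀ (Ioc a ℓ) volume :=
      (integrableOn_Ioc_iff_integrableOn_Ioo).2 (hf₀int.mono_set (Ioo_subset_Ioo_left hax₀.le))
    have e2 : (∫ x in Ioc a ℓ, (((x - x₀) ^ (1 - μ) : ℝ) : ℂ) * Q x)
        = ((2 * (∫ x in Ioc a ℓ, f₀ x).re : ℝ) : ℂ) := by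
      have hcf₀Ioc := conj_int hf₀Ioc
      have ept : ∀ x ∈ Ioc a ℓ, (((x - x₀) ^ (1 - μ) : ℝ) : ℂ) * Q x
          = f₀ x + (starRingEnd ℂ) (f₀ x) := by
        intro x hx
        have ht : (0:ℝ) < x - x₀ := sub_pos.2 (lt_trans hax₀ hx.1)
        have hkey : (((x - x₀) ^ (1 - μ) : ℝ) : ℂ) * (((x - x₀) ^ μ : ℝ) : ℂ)
            = ((x - x₀ : ℝ) : ℂ) := by
          rw [← Complex.ofReal_mul, ← Real.rpow_add ht]
          norm_num
        have hGx : G x = (((x - x₀) ^ μ : ℝ) : ℂ) * u' x := by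
          simp [hGdef, Complex.real_smul]
        simp only [hQdef, hf₀def, hGx, map_mul, Complex.conj_conj, Complex.conj_ofReal]
        linear_combination (g' x * (starRingEnd ℂ) (u' x) + u' x * (starRingEnd ℂ) (g' x)) * hkey
      rw [setIntegral_congr_fun measurableSet_Ioc ept, integral_add hf₀Ioc hcf₀Ioc,
        integral_conj, Complex.add_conj]
    -- boundary terms
    have e3 : ∀ y : ℝ, x₀ < y →
        (((y - x₀) ^ (1 - μ) : ℝ) : ℂ) * (G y * (starRingEnd ℂ) (G y))
        = (((y - x₀) ^ (1 + μ) * ‖u' y‖ ^ 2 : ℝ) : ℂ) := by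
      intro y hy
      have ht : (0:ℝ) < y - x₀ := sub_pos.2 hy
      have hP : G y * (starRingEnd ℂ) (G y) = ((‖G y‖ ^ 2 : ℝ) : ℂ) := by
        rw [Complex.mul_conj]
        norm_cast
        rw [← Complex.sq_norm]
      rw [hP, ← Complex.ofReal_mul]
      congr 1
      have hGn : ‖G y‖ = (y - x₀) ^ μ * ‖u' y‖ := by
        simp [hGdef, norm_smul, Real.norm_eq_abs, abs_of_pos (Real.rpow_pos_of_pos ht μ)]
      rw [hGn]
      have key3 : (y - x₀) ^ (1 - μ) * ((y - x₀) ^ μ * (y - x₀) ^ μ) = (y - x₀) ^ (1 + μ) := by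
        rw [← Real.rpow_add ht, ← Real.rpow_add ht]
        congr 1
        ring
      linear_combination (‖u' y‖ ^ 2) * key3
    rw [e1, e2, e3 ℓ hxl, e3 a hax₀, ← Complex.ofReal_add, ← Complex.ofReal_sub] at eqC
    exact_mod_cast eqC
  -- limits a → x₀⁺
  have hSt : Tendsto (fun a => ∫ x in Ioc a ℓ, S x) (𝓝[>] x₀)
      (𝓝 (∫ x in Ioo x₀ ℓ, S x)) := tendsto_Ioc_integral hxl S hSint
  have hft : Tendsto (fun a => ∫ x in Ioc a ℓ, f₀ x) (𝓝[>] x₀)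
      (𝓝 (∫ x in Ioo x₀ ℓ, f₀ x)) := tendsto_Ioc_integral hxl f₀ hf₀int
  have hfre : Tendsto (fun a => (∫ x in Ioc a ℓ, f₀ x).re) (𝓝[>] x₀)
      (𝓝 ((∫ x in Ioo x₀ ℓ, f₀ x).re)) := (Complex.continuous_re.tendsto _).comp hft
  set c : ℝ := (ℓ - x₀) ^ (1 + μ) * ‖u' ℓ‖ ^ 2 - (1 - μ) * (∫ x in Ioo x₀ ℓ, S x)
      - 2 * (∫ x in Ioo x₀ ℓ, f₀ x).re with hcdef
  have hIooev : ∀ᶠ a in 𝓝[>] x₀, a ∈ Ioo x₀ ℓ :=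
    eventually_iff.mpr (by exact Ioo_mem_nhdsGT_of_mem (left_mem_Ico.2 hxl))
  have hBt : Tendsto (fun a => (a - x₀) ^ (1 + μ) * ‖u' a‖ ^ 2) (𝓝[>] x₀) (𝓝 c) := by
    have hT : Tendsto (fun a => (ℓ - x₀) ^ (1 + μ) * ‖u' ℓ‖ ^ 2
        - (1 - μ) * (∫ x in Ioc a ℓ, S x) - 2 * (∫ x in Ioc a ℓ, f₀ x).re) (𝓝[>] x₀) (𝓝 c) := by
      rw [hcdef]
      exact (tendsto_const_nhds.sub (hSt.const_mul _)).sub (hfre.const_mul 2)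
    refine hT.congr' ?_
    filter_upwards [hIooev] with a ha
    have := key a ha
    linarith
  have hge : 0 ≤ c := by
    refine ge_of_tendsto hBt ?_
    filter_upwards [self_mem_nhdsWithin] with a ha
    have h1 : (0:ℝ) ≤ a - x₀ := sub_nonneg.2 (le_of_lt ha)
    positivity
  have hle : c ≤ 0 := by
    by_contra hpos
    push_neg at hpos
    have hev : ∀ᶠ a in 𝓝[>] x₀, c / 2 < (a - x₀) ^ (1 + μ) * ‖u' a‖ ^ 2 :=
      hBt.eventually (eventually_gt_nhds (half_lt_self hpos))
    obtain ⟨m, hm, hsub⟩ := mem_nhdsGT_iff_exists_Ioo_subset.1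
      (eventually_iff.1 (hev.and hIooev))
    have hinv_int : IntegrableOn (fun x : ℝ => (x - x₀)⁻¹) (Ioo x₀ m) volume := by
      have hint : IntegrableOn (fun x : ℝ => c / 2 * (x - x₀)⁻¹) (Ioo x₀ m) volume := by
        have hSm : IntegrableOn S (Ioo x₀ m) volume := by
          refine hSint.mono_set fun x hx => ?_
          exact ⟨hx.1, (hsub hx).2.2⟩
        refine hSm.mono' (((measurable_id.sub_const x₀).inv.const_mul
          (c / 2)).aestronglyMeasurable) ?_
        filter_upwards [self_mem_ae_restrict measurableSet_Ioo] with x hx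
        have ht : (0:ℝ) < x - x₀ := sub_pos.2 hx.1
        obtain ⟨hlt, hxIoo⟩ := hsub hx
        have hBS : (x - x₀) ^ (1 + μ) * ‖u' x‖ ^ 2 = (x - x₀) * S x := by
          simp only [hSdef]
          rw [Real.rpow_add ht, Real.rpow_one]
          ring
        rw [hBS] at hlt
        rw [Real.norm_of_nonneg (by positivity)]
        rw [← div_eq_mul_inv, div_le_iff₀ ht]
        nlinarith
      have h2 : IntegrableOn (fun x : ℝ => 2 / c * (c / 2 * (x - x₀)⁻¹)) (Ioo x₀ m) volume :=
        hint.const_mul (2 / c)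
      refine h2.congr_fun (fun x hx => ?_) measurableSet_Ioo
      have hne : x - x₀ ≠ 0 := ne_of_gt (sub_pos.2 hx.1)
      field_simp
    have hII : IntervalIntegrable (fun x : ℝ => (x - x₀)⁻¹) volume x₀ m := by
      rw [intervalIntegrable_iff_integrableOn_Ioc_of_le (le_of_lt hm)]
      exact (integrableOn_Ioc_iff_integrableOn_Ioo).2 hinv_int
    rw [intervalIntegrable_sub_inv_iff] at hII
    rcases hII with h | h
    · exact (ne_of_lt hm) h
    · exact h left_mem_uIcc
  have hc0 : (ℓ - x₀) ^ (1 + μ) * ‖u' ℓ‖ ^ 2 - (1 - μ) * (∫ x in Ioo x₀ ℓ, S x)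
      - 2 * (∫ x in Ioo x₀ ℓ, f₀ x).re = 0 := by
    rw [← hcdef]
    exact le_antisymm hle hge
  linarith
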